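/- Let n ≥ 1 and let M ∈ Sp(2n) have the n×n block form M = [[A, B],[C, D]] with B and D invertible. Suppose every complex eigenvalue ω of the matrix N M⁻¹ N M satisfies |ω| = 1 and ω ≠ −1. Then every complex eigenvalue μ of the n×n matrix CBᵀ is real and satisfies −1 < μ ≤ 0. -/

import Mathlib

open Matrix

/-- The standard symplectic matrix `J = [[0, -Iₙ], [Iₙ, 0]]` in `n × n` block form. -/
def Jmat (n : ℕ) : Matrix (Fin n ⊕ Fin n) (Fin n ⊕ Fin n) ℝ :=
  Matrix.fromBlocks 0 (-1) 1 0

/-- The matrix `N = [[-Iₙ, 0], [0, Iₙ]]` in `n × n` block form. -/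
def Nmat (n : ℕ) : Matrix (Fin n ⊕ Fin n) (Fin n ⊕ Fin n) ℝ :=
  Matrix.fromBlocks (-1) 0 0 1

lemma detQ (n : ℕ) (Ac Bc Cc Dc : Matrix (Fin n) (Fin n) ℂ) (l : ℂ)
    (hAD : Ac * Dcᵀ = 1 + Bc * Ccᵀ) (hCD : Cc * Dcᵀ = Dc * Ccᵀ)
    (hDdet : Dc.det ≠ 0) (hl : l ≠ 1) :
    (Matrix.fromBlocks ((l-1)•Ac) (-((1+l)•Bc)) ((1+l)•Cc) ((1-l)•Dc)).det
      = ((4*l) • (Bc*Ccᵀ) - ((1-l)^2) • (1:Matrix (Fin n) (Fin n) ℂ)).det := by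
  set T : Matrix (Fin n) (Fin n) ℂ := (4*l) • (Bc*Ccᵀ) - ((1-l)^2) • 1 with hT
  have key : Matrix.fromBlocks ((l-1)•Ac) (-((1+l)•Bc)) ((1+l)•Cc) ((1-l)•Dc)
      * Matrix.fromBlocks ((1-l)•Dcᵀ) 0 ((-(1+l))•Ccᵀ) 1
      = Matrix.fromBlocks T (-((1+l)•Bc)) 0 ((1-l)•Dc) := by
    rw [Matrix.fromBlocks_multiply]
    refine Matrix.fromBlocks_inj.mpr ⟨?_, ?_, ?_, ?_⟩
    · simp only [Matrix.smul_mul, Matrix.mul_smul, Matrix.neg_mul, Matrix.mul_neg,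
        smul_smul, hAD, hT, smul_add]
      module
    · simp
    · simp only [Matrix.smul_mul, Matrix.mul_smul, smul_smul, hCD]
      module
    · simp
  have hd := congrArg Matrix.det key
  rw [Matrix.det_mul, Matrix.det_fromBlocks_zero₁₂, Matrix.det_fromBlocks_zero₂₁] at hd
  have hsc : ((1-l)•Dcᵀ).det = (1-l)^n * Dc.det := by
    rw [Matrix.det_smul, Matrix.det_transpose, Fintype.card_fin]
  have hsc2 : ((1-l)•Dc).det = (1-l)^n * Dc.det := by
    rw [Matrix.det_smul, Fintype.card_fin]
  rw [hsc, Matrix.det_one, mul_one, hsc2] at hd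
  have hne : (1-l)^n * Dc.det ≠ 0 := by
    exact mul_ne_zero (pow_ne_zero _ (sub_ne_zero.mpr (fun h => hl h.symm))) hDdet
  exact mul_right_cancel₀ hne hd

theorem stmt_11 (n : ℕ) (hn : 1 ≤ n)
    (A B C D : Matrix (Fin n) (Fin n) ℝ)
    (M : Matrix (Fin n ⊕ Fin n) (Fin n ⊕ Fin n) ℝ)
    (hM : M = Matrix.fromBlocks A B C D)
    (hsp : Mᵀ * Jmat n * M = Jmat n)
    (hB : IsUnit B) (hD : IsUnit D)
    (hev : ∀ ω ∈ spectrum ℂ ((Nmat n * M⁻¹ * Nmat n * M).map (Complex.ofReal ·)),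
      ‖ω‖ = 1 ∧ ω ≠ -1) :
    ∀ μ ∈ spectrum ℂ ((C * Bᵀ).map (Complex.ofReal ·)),
      μ.im = 0 ∧ -1 < μ.re ∧ μ.re ≤ 0 := by
    -- J, N facts
  have hJJ : Jmat n * Jmat n = -1 := by
    simp [Jmat, Matrix.fromBlocks_multiply, ← Matrix.fromBlocks_one, Matrix.fromBlocks_neg]
  have hNN : Nmat n * Nmat n = 1 := by
    simp [Nmat, Matrix.fromBlocks_multiply, ← Matrix.fromBlocks_one]
  have hJu1 : Jmat n * (Jmat n)ᵀ = 1 := by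
    simp [Jmat, Matrix.fromBlocks_transpose, Matrix.fromBlocks_multiply, ← Matrix.fromBlocks_one]
  have hJdet : IsUnit (Jmat n).det := by
    have h := congrArg Matrix.det hJu1
    rw [Matrix.det_mul, Matrix.det_transpose, Matrix.det_one] at h
    exact IsUnit.of_mul_eq_one _ h
  -- M is invertible
  have hMdet : IsUnit M.det := by
    rw [isUnit_iff_ne_zero]
    intro h0
    have h2 := congrArg Matrix.det hsp
    rw [Matrix.det_mul, Matrix.det_mul, Matrix.det_transpose, h0] at h2
    simp at h2
    exact hJdet.ne_zero h2.symm
  have hMMinv : M * M⁻¹ = 1 := Matrix.mul_nonsing_inv M hMdet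
  have hMinvM : M⁻¹ * M = 1 := Matrix.nonsing_inv_mul M hMdet
  -- M J Mᵀ = J
  have h1 : Mᵀ * Jmat n = Jmat n * M⁻¹ := by
    calc Mᵀ * Jmat n = Mᵀ * Jmat n * (M * M⁻¹) := by rw [hMMinv, mul_one]
    _ = (Mᵀ * Jmat n * M) * M⁻¹ := by rw [mul_assoc, mul_assoc, mul_assoc]
    _ = Jmat n * M⁻¹ := by rw [hsp]
  have hMt : Mᵀ = Jmat n * M⁻¹ * (-(Jmat n)) := by
    calc Mᵀ = Mᵀ * (Jmat n * (-(Jmat n))) := by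
          rw [mul_neg, hJJ, neg_neg, mul_one]
    _ = (Mᵀ * Jmat n) * (-(Jmat n)) := by rw [mul_assoc]
    _ = Jmat n * M⁻¹ * (-(Jmat n)) := by rw [h1]
  have hsp' : M * Jmat n * Mᵀ = Jmat n := by
    rw [hMt]
    have e : M * Jmat n * (Jmat n * M⁻¹ * -(Jmat n))
        = M * (Jmat n * Jmat n) * M⁻¹ * (-(Jmat n)) := by
      noncomm_ring
    rw [e, hJJ]
    simp only [Matrix.mul_neg, Matrix.mul_one, Matrix.neg_mul, neg_neg]
    rw [hMMinv, one_mul]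
  have hkey : (Matrix.fromBlocks A B C D) * Jmat n * (Matrix.fromBlocks A B C D)ᵀ = Jmat n := by
    rw [← hM]; exact hsp'
  rw [Jmat, Matrix.fromBlocks_transpose, Matrix.fromBlocks_multiply, Matrix.fromBlocks_multiply] at hkey
  simp only [Matrix.mul_zero, Matrix.mul_one, Matrix.mul_neg, zero_add, add_zero,
    Matrix.neg_mul, zero_add, add_zero] at hkey
  obtain ⟨h11, h12, h21, h22⟩ := Matrix.fromBlocks_inj.mp hkey
  have hADt : A * Dᵀ = 1 + B * Cᵀ := by
    rw [← sub_eq_add_neg, sub_eq_iff_eq_add] at h12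
    rw [h12]; abel
  have hCDt : C * Dᵀ = D * Cᵀ := by
    rw [← sub_eq_add_neg, sub_eq_zero] at h22
    exact h22.symm
  clear h11 h21 hkey
  -- complexification
  have mone : (1 : Matrix (Fin n) (Fin n) ℝ).map ⇑Complex.ofRealHom = 1 :=
    Matrix.map_one _ (map_zero _) (map_one _)
  have moneS : (1 : Matrix (Fin n ⊕ Fin n) (Fin n ⊕ Fin n) ℝ).map ⇑Complex.ofRealHom = 1 :=
    Matrix.map_one _ (map_zero _) (map_one _)
  have madd : ∀ (X Y : Matrix (Fin n) (Fin n) ℝ), (X + Y).map ⇑Complex.ofRealHom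
      = X.map ⇑Complex.ofRealHom + Y.map ⇑Complex.ofRealHom :=
    fun X Y => Matrix.map_add _ (by simp) _ _
  set Ac := A.map ⇑Complex.ofRealHom with hAc
  set Bc := B.map ⇑Complex.ofRealHom with hBc
  set Cc := C.map ⇑Complex.ofRealHom with hCc
  set Dc := D.map ⇑Complex.ofRealHom with hDc
  set Mc := M.map ⇑Complex.ofRealHom with hMcd
  set Nc := (Nmat n).map ⇑Complex.ofRealHom with hNcd
  have hADc : Ac * Dcᵀ = 1 + Bc * Ccᵀ := by
    have h := congrArg (fun X : Matrix (Fin n) (Fin n) ℝ => X.map ⇑Complex.ofRealHom) hADt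
    simp only [Matrix.map_mul, madd, mone, Matrix.transpose_map] at h
    exact h
  have hCDc : Cc * Dcᵀ = Dc * Ccᵀ := by
    have h := congrArg (fun X : Matrix (Fin n) (Fin n) ℝ => X.map ⇑Complex.ofRealHom) hCDt
    simp only [Matrix.map_mul, Matrix.transpose_map] at h
    exact h
  have hNcb : Nc = Matrix.fromBlocks (-1) 0 0 1 := by
    rw [hNcd, Nmat, Matrix.fromBlocks_map]
    congr 1 <;> simp [← RingHom.mapMatrix_apply, _root_.map_one, _root_.map_zero, _root_.map_neg]
  have hMcb : Mc = Matrix.fromBlocks Ac Bc Cc Dc := by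
    rw [hMcd, hM, Matrix.fromBlocks_map]
  have hNcNc : Nc * Nc = 1 := by
    rw [hNcd, ← Matrix.map_mul, hNN]; exact moneS
  have hMcdet : IsUnit Mc.det := by
    rw [hMcd, ← RingHom.mapMatrix_apply, ← RingHom.map_det, isUnit_iff_ne_zero]
    simpa using hMdet.ne_zero
  have hDcdet : Dc.det ≠ 0 := by
    rw [hDc, ← RingHom.mapMatrix_apply, ← RingHom.map_det]
    simpa using (((Matrix.isUnit_iff_isUnit_det D).mp hD).ne_zero)
  have hMinvMc : Mc⁻¹ * Mc = 1 := Matrix.nonsing_inv_mul Mc hMcdet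
  have hMinvc : (M⁻¹).map ⇑Complex.ofRealHom = Mc⁻¹ := by
    symm; apply Matrix.inv_eq_right_inv
    rw [hMcd, ← Matrix.map_mul, hMMinv]; exact moneS
  have hPc : (Nmat n * M⁻¹ * Nmat n * M).map (Complex.ofReal ·) = Nc * Mc⁻¹ * Nc * Mc := by
    show (Nmat n * M⁻¹ * Nmat n * M).map ⇑Complex.ofRealHom = _
    rw [Matrix.map_mul, Matrix.map_mul, Matrix.map_mul, hMinvc, ← hNcd, ← hMcd]
  -- start on eigenvalue
  intro μ hμ
  rw [spectrum.mem_iff] at hμ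
  have hdet0 : ((algebraMap ℂ (Matrix (Fin n) (Fin n) ℂ)) μ - (C * Bᵀ).map (Complex.ofReal ·)).det = 0 := by
    by_contra hne
    exact hμ ((Matrix.isUnit_iff_isUnit_det _).mpr (isUnit_iff_ne_zero.mpr hne))
  have hdet0' : (μ • (1 : Matrix (Fin n) (Fin n) ℂ) - Cc * Bcᵀ).det = 0 := by
    rw [← hdet0]
    congr 1
    rw [Algebra.algebraMap_eq_smul_one]
    congr 1
    show Cc * Bcᵀ = (C * Bᵀ).map ⇑Complex.ofRealHom
    rw [Matrix.map_mul, Matrix.transpose_map, ← hCc, ← hBc]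
  by_cases hμ0 : μ = 0
  · subst hμ0; norm_num
  obtain ⟨s, hs⟩ := IsAlgClosed.exists_pow_nat_eq ((1+2*μ)^2 - 1) (n := 2) (by norm_num)
  obtain ⟨l, hquad⟩ : ∃ l : ℂ, (1-l)^2 = 4*l*μ := ⟨1+2*μ+s, by linear_combination hs⟩
  have hl1 : l ≠ 1 := by
    intro h
    rw [h] at hquad
    apply hμ0
    linear_combination (-1/4 : ℂ) * hquad
  have hl0 : l ≠ 0 := by
    intro h
    rw [h] at hquad
    norm_num at hquad
  -- det of T is zero
  have hTz : ((4*l) • (Bc*Ccᵀ) - ((1-l)^2) • (1:Matrix (Fin n) (Fin n) ℂ)).det = 0 := by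
    have e1 : (4*l) • (Bc*Ccᵀ) - ((1-l)^2) • (1:Matrix (Fin n) (Fin n) ℂ)
        = (4*l) • (Bc*Ccᵀ - μ • 1) := by
      rw [hquad, smul_sub, smul_smul]
    have e2 : Bc*Ccᵀ - μ • (1:Matrix (Fin n) (Fin n) ℂ) = -((μ • 1 - Cc*Bcᵀ)ᵀ) := by
      simp [Matrix.transpose_sub, Matrix.transpose_smul, Matrix.transpose_mul, neg_sub]
    rw [e1, Matrix.det_smul, e2, Matrix.det_neg, Matrix.det_transpose, hdet0', mul_zero, mul_zero]
  -- det of Q is zero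
  have hQb : Nc * Mc - l • (Mc * Nc)
      = Matrix.fromBlocks ((l-1)•Ac) (-((1+l)•Bc)) ((1+l)•Cc) ((1-l)•Dc) := by
    rw [hNcb, hMcb]
    simp only [Matrix.fromBlocks_multiply, Matrix.fromBlocks_smul, Matrix.neg_mul,
      Matrix.one_mul, Matrix.zero_mul, Matrix.mul_zero, Matrix.mul_one, Matrix.mul_neg,
      add_zero, zero_add, sub_eq_add_neg, Matrix.fromBlocks_neg, Matrix.fromBlocks_add]
    refine Matrix.fromBlocks_inj.mpr ⟨?_,?_,?_,?_⟩ <;> module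
  have hQdet0 : (Nc * Mc - l • (Mc * Nc)).det = 0 := by
    rw [hQb, detQ n Ac Bc Cc Dc l hADc hCDc hDcdet hl1]
    exact hTz
  -- l is in spectrum of Pc
  have hPfact : Nc * Mc⁻¹ * Nc * Mc - l • (1 : Matrix (Fin n ⊕ Fin n) (Fin n ⊕ Fin n) ℂ)
      = Nc * Mc⁻¹ * (Nc * Mc - l • (Mc * Nc)) := by
    rw [mul_sub, Matrix.mul_smul, ← mul_assoc,
      show Nc * Mc⁻¹ * (Mc * Nc) = Nc * (Mc⁻¹ * Mc) * Nc by
        rw [mul_assoc, mul_assoc, ← mul_assoc Mc⁻¹ Mc Nc],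
      hMinvMc, mul_one, hNcNc]
  have hlspec : l ∈ spectrum ℂ ((Nmat n * M⁻¹ * Nmat n * M).map (Complex.ofReal ·)) := by
    rw [spectrum.mem_iff]
    intro hu
    have hd : ((algebraMap ℂ (Matrix (Fin n ⊕ Fin n) (Fin n ⊕ Fin n) ℂ)) l
        - (Nmat n * M⁻¹ * Nmat n * M).map (Complex.ofReal ·)).det = 0 := by
      rw [Algebra.algebraMap_eq_smul_one, hPc, ← neg_sub, hPfact, Matrix.det_neg,
        Matrix.det_mul, Matrix.det_mul, hQdet0]
      ring
    exact (isUnit_iff_ne_zero.mp ((Matrix.isUnit_iff_isUnit_det _).mp hu)) hd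
  obtain ⟨habs, hlne⟩ := hev l hlspec
  -- conclude
  have hc : l * (starRingEnd ℂ) l = 1 := by
    rw [Complex.mul_conj, Complex.normSq_eq_norm_sq, habs]
    norm_num
  have h1 : (1-l)^2 * (starRingEnd ℂ) l = 4*μ := by
    rw [hquad]
    linear_combination 4*μ*hc
  have h4 : 4*μ = (starRingEnd ℂ) l + l - 2 := by
    linear_combination h1.symm + (l - 2) * hc
  have him : μ.im = 0 := by
    have h := congrArg Complex.im h4
    simp [Complex.conj_im] at h
    linarith
  have hre4 : 4*μ.re = 2*l.re - 2 := by
    have h := congrArg Complex.re h4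
    simp [Complex.conj_re] at h
    linarith
  have habs_re := Complex.abs_re_le_norm l
  rw [habs] at habs_re
  have hle : l.re ≤ 1 := (abs_le.mp habs_re).2
  have hge : -1 ≤ l.re := (abs_le.mp habs_re).1
  have hgt : -1 < l.re := by
    rcases lt_or_eq_of_le hge with h | h
    · exact h
    · exfalso
      apply hlne
      have hnsq : Complex.normSq l = 1 := by
        rw [← Complex.sq_norm, habs]; norm_num
      have : l.im = 0 := by
        have := Complex.normSq_apply l
        rw [hnsq, ← h] at this
        nlinarith [sq_nonneg l.im]
      apply Complex.ext <;> simp [← h, this]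
  exact ⟨him, by constructor <;> linarith⟩
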